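/- As δ → 0⁺, the quantity (1/4)∫_{-1}^{1}∫_{-1}^{1} (1-xy+δ)^{-2} dx dy equals -(1/2) log δ + (1/2) log 2 + o(1). -/

import Mathlib

open MeasureTheory Filter

lemma inner_integral_eval {δ x : ℝ} (hδ : 0 < δ) (hx : |x| ≤ 1) :
    (∫ y in (-1:ℝ)..1, 1 / (1 - x*y + δ)^2) = 2 / ((1+δ)^2 - x^2) := by
  have hpos : ∀ y ∈ Set.uIcc (-1:ℝ) 1, 0 < 1 - x*y + δ := by
    intro y hy
    rw [Set.uIcc_of_le (by norm_num)] at hy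
    have hy' : |y| ≤ 1 := abs_le.2 ⟨hy.1, hy.2⟩
    have : |x*y| ≤ 1 := by
      rw [abs_mul]
      calc |x| * |y| ≤ 1 * 1 := by
            exact mul_le_mul hx hy' (abs_nonneg _) zero_le_one
        _ = 1 := by ring
    nlinarith [abs_le.1 this]
  have hcont : IntervalIntegrable (fun y => 1 / (1 - x*y + δ)^2) volume (-1) 1 := by
    apply ContinuousOn.intervalIntegrable
    apply ContinuousOn.div continuousOn_const
    · fun_prop
    · intro y hy
      exact pow_ne_zero _ (ne_of_gt (hpos y hy))
  rcases eq_or_ne x 0 with rfl | hx0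
  · simp only [zero_mul, sub_zero]
    rw [intervalIntegral.integral_const]
    norm_num
    rw [div_eq_mul_inv]
  · have key : ∀ y ∈ Set.uIcc (-1:ℝ) 1,
        HasDerivAt (fun y => x⁻¹ * (1 - x*y + δ)⁻¹) (1 / (1 - x*y + δ)^2) y := by
      intro y hy
      have h1 : HasDerivAt (fun y : ℝ => 1 - x*y + δ) (-x) y := by
        have := ((hasDerivAt_id y).const_mul x).const_sub 1
        simpa using this.add_const δ
      have h2 := (h1.inv (ne_of_gt (hpos y hy))).const_mul x⁻¹
      refine h2.congr_deriv ?_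
      have hne := ne_of_gt (hpos y hy)
      field_simp
  -- need to be careful: `key` only on uIcc; use integral_eq_sub_of_hasDerivAt
    rw [intervalIntegral.integral_eq_sub_of_hasDerivAt key hcont]
    have h1 : (0:ℝ) < 1 - x*1 + δ := hpos 1 (by simp)
    have h2 : (0:ℝ) < 1 - x*(-1) + δ := hpos (-1) (by simp)
    have h3 : (1+δ)^2 - x^2 ≠ 0 := by nlinarith
    have e1 : 1 - x*1 + δ = 1+δ-x := by ring
    have e2 : 1 - x*(-1) + δ = 1+δ+x := by ring
    rw [e1, e2]
    have ha : (1+δ-x) ≠ 0 := by nlinarith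
    have hb : (1+δ+x) ≠ 0 := by nlinarith
    field_simp
    ring
lemma outer_integral_eval {δ : ℝ} (hδ : 0 < δ) :
    (∫ x in (-1:ℝ)..1, 2 / ((1+δ)^2 - x^2))
      = (2/(1+δ)) * (Real.log (2+δ) - Real.log δ) := by
  have hpos1 : ∀ x ∈ Set.uIcc (-1:ℝ) 1, 0 < 1 + δ + x := by
    intro x hx
    rw [Set.uIcc_of_le (by norm_num)] at hx
    linarith [hx.1]
  have hpos2 : ∀ x ∈ Set.uIcc (-1:ℝ) 1, 0 < 1 + δ - x := by
    intro x hx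
    rw [Set.uIcc_of_le (by norm_num)] at hx
    linarith [hx.2]
  have key : ∀ x ∈ Set.uIcc (-1:ℝ) 1,
      HasDerivAt (fun x => (1+δ)⁻¹ * (Real.log (1+δ+x) - Real.log (1+δ-x)))
        (2 / ((1+δ)^2 - x^2)) x := by
    intro x hx
    have ha := hpos1 x hx
    have hb := hpos2 x hx
    have d1 : HasDerivAt (fun x : ℝ => Real.log (1+δ+x)) (1+δ+x)⁻¹ x := by
      have h : HasDerivAt (fun x : ℝ => 1+δ+x) 1 x := (hasDerivAt_id x).const_add (1+δ)
      simpa [Function.comp_def] using (Real.hasDerivAt_log (ne_of_gt ha)).comp x h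
    have d2 : HasDerivAt (fun x : ℝ => Real.log (1+δ-x)) (-(1+δ-x)⁻¹) x := by
      have h : HasDerivAt (fun x : ℝ => 1+δ-x) (-1) x := by
        simpa using (hasDerivAt_id x).const_sub (1+δ)
      have := (Real.hasDerivAt_log (ne_of_gt hb)).comp x h
      simpa [Function.comp_def] using this
    have := ((d1.sub d2).const_mul (1+δ)⁻¹)
    refine this.congr_deriv ?_
    have h3 : (1+δ)^2 - x^2 ≠ 0 := by nlinarith
    have ha' := ne_of_gt ha
    have hb' := ne_of_gt hb
    field_simp
    ring
  have hcont : IntervalIntegrable (fun x => 2 / ((1+δ)^2 - x^2)) volume (-1) 1 := by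
    apply ContinuousOn.intervalIntegrable
    apply ContinuousOn.div continuousOn_const
    · fun_prop
    · intro x hx
      have ha := hpos1 x hx
      have hb := hpos2 x hx
      nlinarith
  rw [intervalIntegral.integral_eq_sub_of_hasDerivAt key hcont]
  have e1 : (1:ℝ)+δ+1 = 2+δ := by ring
  have e2 : (1:ℝ)+δ-1 = δ := by ring
  have e3 : (1:ℝ)+δ+(-1) = δ := by ring
  have e4 : (1:ℝ)+δ-(-1) = 2+δ := by ring
  rw [e1, e2, e3, e4]
  have h1 : (1:ℝ)+δ ≠ 0 := by positivity
  field_simp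
  ring

theorem double_integral_inv_sq_asymptotic :
    Tendsto (fun δ : ℝ =>
        (1/4) * (∫ x in (-1:ℝ)..1, ∫ y in (-1:ℝ)..1, 1 / (1 - x*y + δ)^2)
          - (-(1/2) * Real.log δ + (1/2) * Real.log 2))
      (nhdsWithin 0 (Set.Ioi 0)) (nhds 0) := by
  have heq : ∀ᶠ δ in nhdsWithin (0:ℝ) (Set.Ioi 0),
      (1/4) * (∫ x in (-1:ℝ)..1, ∫ y in (-1:ℝ)..1, 1 / (1 - x*y + δ)^2)
          - (-(1/2) * Real.log δ + (1/2) * Real.log 2)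
        = (1/2) * (Real.log (2+δ) / (1+δ) - Real.log 2)
            + (1/(1+δ)) * (Real.log δ * δ) / 2 := by
    filter_upwards [self_mem_nhdsWithin] with δ (hδ : 0 < δ)
    have hin : (∫ x in (-1:ℝ)..1, ∫ y in (-1:ℝ)..1, 1 / (1 - x*y + δ)^2)
        = ∫ x in (-1:ℝ)..1, 2 / ((1+δ)^2 - x^2) := by
      apply intervalIntegral.integral_congr
      intro x hx
      rw [Set.uIcc_of_le (by norm_num)] at hx
      exact inner_integral_eval hδ (abs_le.2 ⟨hx.1, hx.2⟩)
    rw [hin, outer_integral_eval hδ]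
    have h1 : (1:ℝ)+δ ≠ 0 := by positivity
    field_simp
    ring
  rw [tendsto_congr' heq]
  have T1 : Tendsto (fun δ : ℝ => (1/2) * (Real.log (2+δ) / (1+δ) - Real.log 2))
      (nhdsWithin 0 (Set.Ioi 0)) (nhds 0) := by
    have hc : ContinuousAt (fun δ : ℝ => (1/2) * (Real.log (2+δ) / (1+δ) - Real.log 2)) 0 := by
      apply ContinuousAt.mul continuousAt_const
      apply ContinuousAt.sub _ continuousAt_const
      apply ContinuousAt.div
      · exact (Real.continuousAt_log (by norm_num)).comp (by fun_prop)
      · fun_prop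
      · norm_num
    have h := hc.tendsto.mono_left (nhdsWithin_le_nhds (s := Set.Ioi (0:ℝ)))
    simpa using h
  have T2 : Tendsto (fun δ : ℝ => (1/(1+δ)) * (Real.log δ * δ) / 2)
      (nhdsWithin 0 (Set.Ioi 0)) (nhds 0) := by
    have hA : Tendsto (fun δ : ℝ => 1/(1+δ)) (nhdsWithin 0 (Set.Ioi 0)) (nhds 1) := by
      have hc : ContinuousAt (fun δ : ℝ => 1/(1+δ)) 0 :=
        ContinuousAt.div continuousAt_const (by fun_prop) (by norm_num)
      have h := hc.tendsto.mono_left (nhdsWithin_le_nhds (s := Set.Ioi (0:ℝ)))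
      simpa using h
    have hB : Tendsto (fun δ : ℝ => Real.log δ * δ) (nhdsWithin 0 (Set.Ioi 0)) (nhds 0) := by
      simpa using tendsto_log_mul_rpow_nhdsGT_zero (r := 1) zero_lt_one
    have := (hA.mul hB).div_const 2
    simpa using this
  simpa using T1.add T2
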